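/- For all r ≥ s ≥ 0 there exist positive constants ε, α and n₁ (depending on r and s) such that: if n ≥ n₁ and F is a family of r-subsets of [n] with |F| ≤ ε·n·C(n−s, r−s), and every s-subset of [n] is contained in fewer than α·C(n−s, r−s) members of F, then rk M_s^r(K_n^r − F) = C(n, s). -/
import Mathlib


/-- The higher inclusion matrix `M_s^r(G)` of the hypergraph on `Fin n` with edge set `E`. -/
def inclusionMatrix (n s : ℕ) (E : Finset (Finset (Fin n))) :
    Matrix {e : Finset (Fin n) // e ∈ E} {S : Finset (Fin n) // S.card = s} ℚ :=
  fun e S => if (S : Finset (Fin n)) ⊆ (e : Finset (Fin n)) then 1 else 0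

open Finset

/-- Eigenvalue-type coefficients. -/
def ccAux (n r s j : ℕ) : ℕ := if 2*s ≤ r + j then (n - 2*s).choose (r + j - 2*s) else 0

lemma scalar_id (n r s : ℕ) (hn : 2*s ≤ n) {i : ℕ} (hi : i ≤ s) :
    (if 2*s - i ≤ r then (n - (2*s - i)).choose (r - (2*s - i)) else 0) =
    ∑ j ∈ Finset.range (s+1), ccAux n r s j * i.choose j := by
  by_cases hir : 2*s ≤ r + i
  · have h1 : 2*s - i ≤ r := by omega
    rw [if_pos h1]
    have h2 : n - (2*s - i) = i + (n - 2*s) := by omega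
    have h3 : r - (2*s - i) = r + i - 2*s := by omega
    rw [h2, h3, Nat.add_choose_eq]
    set m := n - 2*s with hm
    set K := r + i - 2*s with hK
    rw [Finset.Nat.sum_antidiagonal_eq_sum_range_succ (fun a b => i.choose a * m.choose b)]
    have e1 : ∑ b ∈ Finset.range (K+1), i.choose b * m.choose (K - b)
        = ∑ b ∈ Finset.range (K+1), if b ≤ K then i.choose b * m.choose (K - b) else 0 :=
      Finset.sum_congr rfl (fun b hb => (if_pos (by simp only [Finset.mem_range] at hb; omega)).symm)
    have step1 : ∑ b ∈ Finset.range (K+1), (if b ≤ K then i.choose b * m.choose (K - b) else 0)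
        = ∑ b ∈ Finset.range (max K i + 1), if b ≤ K then i.choose b * m.choose (K - b) else 0 :=
      Finset.sum_subset (Finset.range_subset_range.2 (by omega))
        (fun b _ hb => by rw [if_neg (by simp only [Finset.mem_range, not_lt] at hb; omega)])
    have step2 : ∑ b ∈ Finset.range (i+1), (if b ≤ K then i.choose b * m.choose (K - b) else 0)
        = ∑ b ∈ Finset.range (max K i + 1), if b ≤ K then i.choose b * m.choose (K - b) else 0 :=
      Finset.sum_subset (Finset.range_subset_range.2 (by omega))
        (fun b _ hb => by
          simp only [Finset.mem_range, not_lt] at hb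
          rcases le_or_gt b K with h | h
          · rw [if_pos h, Nat.choose_eq_zero_of_lt (show i < b by omega), zero_mul]
          · rw [if_neg (by omega)])
    rw [e1, step1, ← step2, ← Finset.sum_range_reflect]
    have step3 : ∑ j ∈ Finset.range (s+1), ccAux n r s j * i.choose j
        = ∑ j ∈ Finset.range (i+1), ccAux n r s j * i.choose j := by
      symm
      exact Finset.sum_subset (Finset.range_subset_range.2 (by omega))
        (fun j _ hj => by
          simp only [Finset.mem_range, not_lt] at hj
          rw [Nat.choose_eq_zero_of_lt (by omega), mul_zero])
    rw [step3]
    apply Finset.sum_congr rfl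
    intro j hj
    simp only [Finset.mem_range] at hj
    have hj' : j ≤ i := by omega
    simp only [Nat.add_sub_cancel]
    by_cases hc : 2*s ≤ r + j
    · rw [if_pos (by omega)]
      unfold ccAux
      rw [if_pos hc]
      have h4 : K - (i - j) = r + j - 2*s := by omega
      rw [h4, Nat.choose_symm hj', mul_comm]
    · rw [if_neg (by omega)]
      unfold ccAux
      rw [if_neg hc, zero_mul]
  · rw [if_neg (by omega)]
    symm
    apply Finset.sum_eq_zero
    intro j hj
    by_cases hc : 2*s ≤ r + j
    · rw [Nat.choose_eq_zero_of_lt (by omega), mul_zero]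
    · unfold ccAux
      rw [if_neg hc, zero_mul]

lemma card_superset {n : ℕ} (r : ℕ) (A : Finset (Fin n)) :
    (((univ : Finset (Fin n)).powersetCard r).filter (fun e => A ⊆ e)).card
      = if A.card ≤ r then (n - A.card).choose (r - A.card) else 0 := by
  split_ifs with h
  · have hcd : ((univ : Finset (Fin n)) \ A).card = n - A.card := by
      rw [Finset.card_sdiff_of_subset (Finset.subset_univ A), Finset.card_univ, Fintype.card_fin]
    rw [← hcd, ← Finset.card_powersetCard (r - A.card) (univ \ A)]
    apply Finset.card_bij' (fun e _ => e \ A) (fun t _ => t ∪ A)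
    · intro e he
      simp only [Finset.mem_filter, Finset.mem_powersetCard_univ] at he
      rw [Finset.mem_powersetCard]
      refine ⟨Finset.sdiff_subset_sdiff (Finset.subset_univ e) le_rfl, ?_⟩
      rw [Finset.card_sdiff_of_subset he.2, he.1]
    · intro t ht
      rw [Finset.mem_powersetCard] at ht
      have hdisj : Disjoint t A := Finset.disjoint_left.2 (fun x hx1 hx2 => by
        have := ht.1 hx1; simp [Finset.mem_sdiff, hx2] at this)
      simp only [Finset.mem_filter, Finset.mem_powersetCard_univ]
      constructor
      · rw [Finset.card_union_of_disjoint hdisj, ht.2]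
        omega
      · exact Finset.subset_union_right
    · intro e he
      simp only [Finset.mem_filter] at he
      exact Finset.sdiff_union_of_subset he.2
    · intro t ht
      rw [Finset.mem_powersetCard] at ht
      have hdisj : Disjoint t A := Finset.disjoint_left.2 (fun x hx1 hx2 => by
        have := ht.1 hx1; simp [Finset.mem_sdiff, hx2] at this)
      exact Finset.union_sdiff_cancel_right hdisj
  · rw [Finset.card_eq_zero, Finset.filter_eq_empty_iff]
    intro e he
    rw [Finset.mem_powersetCard_univ] at he
    intro hAe
    exact h (he ▸ Finset.card_le_card hAe)

lemma card_subset {n : ℕ} (j : ℕ) (B : Finset (Fin n)) :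
    (((univ : Finset (Fin n)).powersetCard j).filter (fun J => J ⊆ B)).card
      = B.card.choose j := by
  rw [← Finset.card_powersetCard j B]
  congr 1
  ext J
  simp only [Finset.mem_filter, Finset.mem_powersetCard, Finset.subset_univ, true_and]
  tauto

lemma count_eq {n r s : ℕ} (hn : 2*s ≤ n) (S T : Finset (Fin n))
    (hS : S.card = s) (hT : T.card = s) :
    (((univ : Finset (Fin n)).powersetCard r).filter (fun e => S ∪ T ⊆ e)).card
      = ∑ j ∈ Finset.range (s+1), ccAux n r s j * ((S ∩ T).card.choose j) := by
  rw [card_superset]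
  have hcard : (S ∪ T).card = 2*s - (S ∩ T).card := by
    have := Finset.card_union_add_card_inter S T
    omega
  have hi : (S ∩ T).card ≤ s := hS ▸ Finset.card_le_card Finset.inter_subset_left
  rw [hcard]
  exact scalar_id n r s hn hi

lemma sq_expand {n : ℕ} (A : Finset (Finset (Fin n))) (p : Finset (Fin n) → Prop)
    [DecidablePred p] (f : Finset (Fin n) → ℚ) :
    (∑ S ∈ A.filter p, f S)^2 = ∑ S ∈ A, ∑ T ∈ A, if p S ∧ p T then f S * f T else 0 := by
  rw [sq, Finset.sum_filter, Finset.sum_mul_sum]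
  refine Finset.sum_congr rfl (fun S _ => Finset.sum_congr rfl (fun T _ => ?_))
  by_cases h1 : p S <;> by_cases h2 : p T <;> simp [h1, h2]

lemma sum_ite_card {n : ℕ} (A : Finset (Finset (Fin n))) (p : Finset (Fin n) → Prop)
    [DecidablePred p] (x : ℚ) :
    ∑ e ∈ A, (if p e then x else 0) = ((A.filter p).card : ℚ) * x := by
  rw [← Finset.sum_filter, Finset.sum_const, nsmul_eq_mul]

lemma quad_id (n r s : ℕ) (hn : 2*s ≤ n) (f : Finset (Fin n) → ℚ) :
    ∑ e ∈ (univ : Finset (Fin n)).powersetCard r,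
        (∑ S ∈ ((univ : Finset (Fin n)).powersetCard s).filter (fun S => S ⊆ e), f S)^2
      = ∑ j ∈ Finset.range (s+1), (ccAux n r s j : ℚ) *
          ∑ J ∈ (univ : Finset (Fin n)).powersetCard j,
            (∑ S ∈ ((univ : Finset (Fin n)).powersetCard s).filter (fun S => J ⊆ S), f S)^2 := by
  have L : ∑ e ∈ (univ : Finset (Fin n)).powersetCard r,
        (∑ S ∈ ((univ : Finset (Fin n)).powersetCard s).filter (fun S => S ⊆ e), f S)^2
      = ∑ S ∈ (univ : Finset (Fin n)).powersetCard s,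
          ∑ T ∈ (univ : Finset (Fin n)).powersetCard s,
            ((((univ : Finset (Fin n)).powersetCard r).filter (fun e => S ∪ T ⊆ e)).card : ℚ)
              * (f S * f T) := by
    simp_rw [sq_expand]
    rw [Finset.sum_comm]
    refine Finset.sum_congr rfl (fun S _ => ?_)
    rw [Finset.sum_comm]
    refine Finset.sum_congr rfl (fun T _ => ?_)
    simp_rw [← Finset.union_subset_iff]
    exact sum_ite_card _ _ _
  have R : ∀ j, ∑ J ∈ (univ : Finset (Fin n)).powersetCard j,
            (∑ S ∈ ((univ : Finset (Fin n)).powersetCard s).filter (fun S => J ⊆ S), f S)^2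
      = ∑ S ∈ (univ : Finset (Fin n)).powersetCard s,
          ∑ T ∈ (univ : Finset (Fin n)).powersetCard s,
            (((S ∩ T).card.choose j : ℕ) : ℚ) * (f S * f T) := by
    intro j
    simp_rw [sq_expand]
    rw [Finset.sum_comm]
    refine Finset.sum_congr rfl (fun S _ => ?_)
    rw [Finset.sum_comm]
    refine Finset.sum_congr rfl (fun T _ => ?_)
    simp_rw [← Finset.subset_inter_iff]
    rw [sum_ite_card, card_subset]
  rw [L]
  symm
  calc ∑ j ∈ Finset.range (s+1), (ccAux n r s j : ℚ) *
          ∑ J ∈ (univ : Finset (Fin n)).powersetCard j,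
            (∑ S ∈ ((univ : Finset (Fin n)).powersetCard s).filter (fun S => J ⊆ S), f S)^2
      = ∑ j ∈ Finset.range (s+1), ∑ S ∈ (univ : Finset (Fin n)).powersetCard s,
          ∑ T ∈ (univ : Finset (Fin n)).powersetCard s,
            (ccAux n r s j : ℚ) * (((S ∩ T).card.choose j : ℚ) * (f S * f T)) := by
        simp_rw [R, Finset.mul_sum]
    _ = ∑ S ∈ (univ : Finset (Fin n)).powersetCard s, ∑ j ∈ Finset.range (s+1),
          ∑ T ∈ (univ : Finset (Fin n)).powersetCard s,
            (ccAux n r s j : ℚ) * (((S ∩ T).card.choose j : ℚ) * (f S * f T)) :=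
        Finset.sum_comm
    _ = ∑ S ∈ (univ : Finset (Fin n)).powersetCard s,
          ∑ T ∈ (univ : Finset (Fin n)).powersetCard s, ∑ j ∈ Finset.range (s+1),
            (ccAux n r s j : ℚ) * (((S ∩ T).card.choose j : ℚ) * (f S * f T)) :=
        Finset.sum_congr rfl (fun S _ => Finset.sum_comm)
    _ = ∑ S ∈ (univ : Finset (Fin n)).powersetCard s,
          ∑ T ∈ (univ : Finset (Fin n)).powersetCard s,
            ((((univ : Finset (Fin n)).powersetCard r).filter (fun e => S ∪ T ⊆ e)).card : ℚ)
              * (f S * f T) := by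
        refine Finset.sum_congr rfl (fun S hS => Finset.sum_congr rfl (fun T hT => ?_))
        rw [Finset.mem_powersetCard_univ] at hS hT
        have hc : ((((univ : Finset (Fin n)).powersetCard r).filter (fun e => S ∪ T ⊆ e)).card : ℚ)
            = ∑ j ∈ Finset.range (s+1), (ccAux n r s j : ℚ) * ((S ∩ T).card.choose j : ℚ) := by
          rw [count_eq hn S T hS hT]
          push_cast
          ring
        rw [hc, Finset.sum_mul]
        exact Finset.sum_congr rfl (fun j _ => by ring)

lemma choose_grow (k : ℕ) : ∀ (s m : ℕ), 2*k ≤ m → (m + s).choose k ≤ 2^s * m.choose k := by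
  intro s
  induction s with
  | zero => intro m _; simp
  | succ t ih =>
    intro m hm
    rcases Nat.eq_zero_or_pos k with hk | hk
    · subst hk; simp [Nat.one_le_two_pow]
    · obtain ⟨k', rfl⟩ : ∃ k', k = k' + 1 := ⟨k - 1, by omega⟩
      have pas : (m + (t+1)).choose (k'+1) = (m + t).choose k' + (m + t).choose (k'+1) := by
        have : m + (t+1) = (m + t) + 1 := by omega
        rw [this, Nat.choose_succ_succ']
      have hmono : (m + t).choose k' ≤ (m + t).choose (k'+1) :=
        Nat.choose_le_succ_of_lt_half_left (by omega)
      calc (m + (t+1)).choose (k'+1) ≤ 2 * (m + t).choose (k'+1) := by omega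
        _ ≤ 2 * (2^t * m.choose (k'+1)) := by
            have := ih m hm
            omega
        _ = 2^(t+1) * m.choose (k'+1) := by ring

theorem stmt6 (r s : ℕ) (hs : s ≤ r) :
    ∃ ε α : ℝ, ∃ n₁ : ℕ, 0 < ε ∧ 0 < α ∧ 0 < n₁ ∧
      ∀ n : ℕ, n₁ ≤ n →
        ∀ F : Finset (Finset (Fin n)),
          F ⊆ (Finset.univ : Finset (Fin n)).powersetCard r →
          (F.card : ℝ) ≤ ε * n * ((n - s).choose (r - s) : ℝ) →
          (∀ S : Finset (Fin n), S.card = s →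
            ((F.filter (fun e => S ⊆ e)).card : ℝ) < α * ((n - s).choose (r - s) : ℝ)) →
          (inclusionMatrix n s (((Finset.univ : Finset (Fin n)).powersetCard r) \ F)).rank
            = n.choose s := by
  have hCr : (0:ℝ) < (r.choose s : ℝ) := by exact_mod_cast Nat.choose_pos hs
  refine ⟨1, 1 / (2^(s+1) * (r.choose s : ℝ)), 2*r + 2*s + 1, one_pos, by positivity, by omega, ?_⟩
  intro n hn F hF _ hF2
  have hn2 : 2*s ≤ n := by omega
  set G := ((Finset.univ : Finset (Fin n)).powersetCard r) \ F with hG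
  set M := inclusionMatrix n s G with hM
  have hinj : Function.Injective M.mulVecLin := by
    rw [← LinearMap.ker_eq_bot, LinearMap.ker_eq_bot']
    intro x hx
    set f : Finset (Fin n) → ℚ := fun S => if h : S.card = s then x ⟨S, h⟩ else 0 with hf
    -- the null vector condition
    have hb : ∀ e ∈ G, ∑ S ∈ ((univ : Finset (Fin n)).powersetCard s).filter
        (fun S => S ⊆ e), f S = 0 := by
      intro e he
      have h0 : M.mulVec x ⟨e, he⟩ = 0 := by
        have := congrFun hx ⟨e, he⟩
        simpa using this
      have h1 : M.mulVec x ⟨e, he⟩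
          = ∑ S ∈ ((univ : Finset (Fin n)).powersetCard s).filter (fun S => S ⊆ e), f S := by
        calc M.mulVec x ⟨e, he⟩
            = ∑ a : {S : Finset (Fin n) // S.card = s}, (if (a : Finset (Fin n)) ⊆ e
                then f (a : Finset (Fin n)) else 0) := by
              simp only [Matrix.mulVec, dotProduct, hM, inclusionMatrix]
              refine Finset.sum_congr rfl (fun a _ => ?_)
              by_cases hae : (a : Finset (Fin n)) ⊆ e
              · simp only [if_pos hae, one_mul, hf, dif_pos a.2]
              · simp only [if_neg hae, zero_mul]
          _ = ∑ S ∈ (univ : Finset (Fin n)).powersetCard s, (if S ⊆ e then f S else 0) :=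
              (Finset.sum_subtype ((univ : Finset (Fin n)).powersetCard s)
                (fun S => Finset.mem_powersetCard_univ) (fun S => if S ⊆ e then f S else 0)).symm
          _ = ∑ S ∈ ((univ : Finset (Fin n)).powersetCard s).filter (fun S => S ⊆ e), f S :=
              (Finset.sum_filter _ _).symm
      rw [← h1, h0]
    -- the quadratic form identity and lower bound
    set A := ∑ S ∈ (univ : Finset (Fin n)).powersetCard s, (f S)^2 with hA
    have hA0 : 0 ≤ A := Finset.sum_nonneg (fun S _ => sq_nonneg _)
    set cs : ℚ := ((n - 2*s).choose (r - s) : ℚ) with hcs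
    have hcs0 : 0 < cs := by
      have h : 0 < (n - 2*s).choose (r - s) := Nat.choose_pos (by omega)
      rw [hcs]
      exact_mod_cast h
    have hjs : ∑ J ∈ (univ : Finset (Fin n)).powersetCard s,
        (∑ S ∈ ((univ : Finset (Fin n)).powersetCard s).filter (fun S => J ⊆ S), f S)^2 = A := by
      refine Finset.sum_congr rfl (fun J hJ => ?_)
      rw [Finset.mem_powersetCard_univ] at hJ
      have : ((univ : Finset (Fin n)).powersetCard s).filter (fun S => J ⊆ S) = {J} := by
        ext S
        simp only [Finset.mem_filter, Finset.mem_powersetCard_univ, Finset.mem_singleton]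
        constructor
        · rintro ⟨h1, h2⟩
          exact (Finset.eq_of_subset_of_card_le h2 (by omega)).symm
        · rintro rfl
          exact ⟨hJ, Finset.Subset.refl _⟩
      rw [this, Finset.sum_singleton]
    have hccs : ccAux n r s s = (n - 2*s).choose (r - s) := by
      unfold ccAux
      rw [if_pos (by omega)]
      congr 1
      omega
    have hlow : cs * A ≤ ∑ e ∈ (univ : Finset (Fin n)).powersetCard r,
        (∑ S ∈ ((univ : Finset (Fin n)).powersetCard s).filter (fun S => S ⊆ e), f S)^2 := by
      rw [quad_id n r s hn2 f]
      have hterm : ∀ j ∈ Finset.range (s+1), (0:ℚ) ≤ (ccAux n r s j : ℚ) *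
          ∑ J ∈ (univ : Finset (Fin n)).powersetCard j,
            (∑ S ∈ ((univ : Finset (Fin n)).powersetCard s).filter (fun S => J ⊆ S), f S)^2 :=
        fun j _ => mul_nonneg (by positivity) (Finset.sum_nonneg (fun J _ => sq_nonneg _))
      have hsingle := Finset.single_le_sum hterm (Finset.self_mem_range_succ s)
      calc cs * A = (ccAux n r s s : ℚ) *
          ∑ J ∈ (univ : Finset (Fin n)).powersetCard s,
            (∑ S ∈ ((univ : Finset (Fin n)).powersetCard s).filter (fun S => J ⊆ S), f S)^2 := by
            rw [hjs, hccs, hcs]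
        _ ≤ _ := hsingle
    -- total over complete = total over F
    have hsplit : ∑ e ∈ (univ : Finset (Fin n)).powersetCard r,
        (∑ S ∈ ((univ : Finset (Fin n)).powersetCard s).filter (fun S => S ⊆ e), f S)^2
      = ∑ e ∈ F,
        (∑ S ∈ ((univ : Finset (Fin n)).powersetCard s).filter (fun S => S ⊆ e), f S)^2 := by
      rw [← Finset.sum_sdiff hF]
      have : ∑ e ∈ ((univ : Finset (Fin n)).powersetCard r) \ F,
          (∑ S ∈ ((univ : Finset (Fin n)).powersetCard s).filter (fun S => S ⊆ e), f S)^2 = 0 :=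
        Finset.sum_eq_zero (fun e he => by rw [hb e he]; norm_num)
      rw [this, zero_add]
    -- Cauchy-Schwarz on each edge of F
    have hCS : ∑ e ∈ F,
        (∑ S ∈ ((univ : Finset (Fin n)).powersetCard s).filter (fun S => S ⊆ e), f S)^2
      ≤ (r.choose s : ℚ) * ∑ e ∈ F,
          ∑ S ∈ ((univ : Finset (Fin n)).powersetCard s).filter (fun S => S ⊆ e), (f S)^2 := by
      rw [Finset.mul_sum]
      refine Finset.sum_le_sum (fun e he => ?_)
      have hecard : e.card = r := by
        have := hF he
        rwa [Finset.mem_powersetCard_univ] at this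
      have := sq_sum_le_card_mul_sum_sq
        (s := ((univ : Finset (Fin n)).powersetCard s).filter (fun S => S ⊆ e)) (f := f)
      rwa [card_subset, hecard] at this
    -- swap the double sum
    have hswap : ∑ e ∈ F,
        ∑ S ∈ ((univ : Finset (Fin n)).powersetCard s).filter (fun S => S ⊆ e), (f S)^2
      = ∑ S ∈ (univ : Finset (Fin n)).powersetCard s,
          ((F.filter (fun e => S ⊆ e)).card : ℚ) * (f S)^2 := by
      simp_rw [Finset.sum_filter]
      rw [Finset.sum_comm]
      exact Finset.sum_congr rfl (fun S _ => sum_ite_card _ _ _)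
    -- degree bound
    have hdeg : ∀ S ∈ (univ : Finset (Fin n)).powersetCard s,
        ((F.filter (fun e => S ⊆ e)).card : ℚ) * (2^(s+1) * (r.choose s : ℚ))
          ≤ ((n - s).choose (r - s) : ℚ) := by
      intro S hS
      rw [Finset.mem_powersetCard_univ] at hS
      have h1 := hF2 S hS
      rw [div_mul_eq_mul_div, one_mul, lt_div_iff₀ (by positivity)] at h1
      have h2 : ((F.filter (fun e => S ⊆ e)).card : ℝ) * (2^(s+1) * (r.choose s : ℝ))
          ≤ ((n - s).choose (r - s) : ℝ) := h1.le
      exact_mod_cast h2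
    -- growth bound
    have hgrow : ((n - s).choose (r - s) : ℚ) ≤ 2^s * cs := by
      have h1 : (n - 2*s) + s = n - s := by omega
      have h2 := choose_grow (r - s) s (n - 2*s) (by omega)
      rw [h1] at h2
      rw [hcs]
      exact_mod_cast h2
    -- combine
    have hB : 2^(s+1) * ((r.choose s : ℚ) * ∑ S ∈ (univ : Finset (Fin n)).powersetCard s,
        ((F.filter (fun e => S ⊆ e)).card : ℚ) * (f S)^2)
      ≤ ((n - s).choose (r - s) : ℚ) * A := by
      calc 2^(s+1) * ((r.choose s : ℚ) * ∑ S ∈ (univ : Finset (Fin n)).powersetCard s,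
            ((F.filter (fun e => S ⊆ e)).card : ℚ) * (f S)^2)
          = ∑ S ∈ (univ : Finset (Fin n)).powersetCard s,
              (((F.filter (fun e => S ⊆ e)).card : ℚ) * (2^(s+1) * (r.choose s : ℚ))) * (f S)^2 := by
            rw [Finset.mul_sum, Finset.mul_sum]
            exact Finset.sum_congr rfl (fun S _ => by ring)
        _ ≤ ∑ S ∈ (univ : Finset (Fin n)).powersetCard s,
              ((n - s).choose (r - s) : ℚ) * (f S)^2 :=
            Finset.sum_le_sum (fun S hS =>
              mul_le_mul_of_nonneg_right (hdeg S hS) (sq_nonneg _))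
        _ = ((n - s).choose (r - s) : ℚ) * A := by rw [hA, Finset.mul_sum]
    have hAzero : A = 0 := by
      have c1 : cs * A ≤ (r.choose s : ℚ) * ∑ S ∈ (univ : Finset (Fin n)).powersetCard s,
          ((F.filter (fun e => S ⊆ e)).card : ℚ) * (f S)^2 := by
        calc cs * A ≤ _ := hlow
          _ = _ := hsplit
          _ ≤ _ := hCS
          _ = (r.choose s : ℚ) * ∑ S ∈ (univ : Finset (Fin n)).powersetCard s,
              ((F.filter (fun e => S ⊆ e)).card : ℚ) * (f S)^2 := by rw [hswap]
      have c2 : (2:ℚ)^(s+1) * (cs * A) ≤ ((n - s).choose (r - s) : ℚ) * A :=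
        le_trans (mul_le_mul_of_nonneg_left c1 (by positivity)) hB
      have c3 : ((n - s).choose (r - s) : ℚ) * A ≤ (2^s * cs) * A :=
        mul_le_mul_of_nonneg_right hgrow hA0
      have key : 2 * ((2:ℚ)^s * (cs * A)) ≤ (2:ℚ)^s * (cs * A) := by
        calc 2 * ((2:ℚ)^s * (cs * A)) = (2:ℚ)^(s+1) * (cs * A) := by ring
          _ ≤ ((n - s).choose (r - s) : ℚ) * A := c2
          _ ≤ (2^s * cs) * A := c3
          _ = (2:ℚ)^s * (cs * A) := by ring
      have hXpos : (0:ℚ) ≤ (2:ℚ)^s * (cs * A) :=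
        mul_nonneg (by positivity) (mul_nonneg hcs0.le hA0)
      have hX0 : (2:ℚ)^s * (cs * A) = 0 := le_antisymm (by linarith) hXpos
      have hcsA : cs * A = 0 :=
        (mul_eq_zero.1 hX0).resolve_left (pow_ne_zero _ two_ne_zero)
      exact (mul_eq_zero.1 hcsA).resolve_left hcs0.ne'
    -- conclude x = 0
    have hfz : ∀ S ∈ (univ : Finset (Fin n)).powersetCard s, f S = 0 := by
      intro S hS
      have := (Finset.sum_eq_zero_iff_of_nonneg (fun S _ => sq_nonneg (f S))).1 hAzero S hS
      exact sq_eq_zero_iff.1 this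
    funext S
    have hSP : (S : Finset (Fin n)) ∈ (univ : Finset (Fin n)).powersetCard s := by
      rw [Finset.mem_powersetCard_univ]; exact S.2
    have := hfz S hSP
    rw [hf] at this
    simpa [dif_pos S.2] using this
  rw [Matrix.rank, LinearMap.finrank_range_of_inj hinj, Module.finrank_fintype_fun_eq_card,
    Fintype.card_subtype]
  have : (univ.filter fun (S : Finset (Fin n)) => S.card = s)
      = (univ : Finset (Fin n)).powersetCard s := by
    ext S
    simp [Finset.mem_powersetCard_univ]
  rw [this, Finset.card_powersetCard, Finset.card_univ, Fintype.card_fin]
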